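/- arXiv:2006.11822 — 2 statements merged into one kernel-verified Lean document; each statement's English description precedes it below -/
import Mathlib

section
/- In the conjugate left 𝕆-module 𝕆̄ (action p ⋆ m = p̄m), an element m is conjugate associative, i.e., (pq) ⋆ m = q ⋆ (p ⋆ m) for all p, q ∈ 𝕆, if and only if m ∈ ℝ·1; and the only associative element of 𝕆̄ is 0. -/
noncomputable section

open Quaternion

/-- The octonions, via the Cayley–Dickson construction on the quaternions. -/
def Octonion : Type := ℍ[ℝ] × ℍ[ℝ]

namespace Octonion

instance : AddCommGroup Octonion := inferInstanceAs (AddCommGroup (ℍ[ℝ] × ℍ[ℝ]))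
instance : Module ℝ Octonion := inferInstanceAs (Module ℝ (ℍ[ℝ] × ℍ[ℝ]))

instance : One Octonion := ⟨((1 : ℍ[ℝ]), (0 : ℍ[ℝ]))⟩
instance : Mul Octonion :=
  ⟨fun x y => (x.1 * y.1 - star y.2 * x.2, y.2 * x.1 + x.2 * star y.1)⟩
/-- Octonionic conjugation. -/
instance : Star Octonion := ⟨fun x => (star x.1, -x.2)⟩

/-- The associator `[a,b,c] = (ab)c - a(bc)`. -/
def assoc (a b c : Octonion) : Octonion := a * b * c - a * (b * c)

/-- The standard imaginary units `e 0 = e₁, …, e 6 = e₇`. -/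
def e : Fin 7 → Octonion
  | 0 => ((⟨0,1,0,0⟩ : ℍ[ℝ]), 0)
  | 1 => ((⟨0,0,1,0⟩ : ℍ[ℝ]), 0)
  | 2 => ((⟨0,0,0,1⟩ : ℍ[ℝ]), 0)
  | 3 => (0, (1 : ℍ[ℝ]))
  | 4 => (0, (⟨0,1,0,0⟩ : ℍ[ℝ]))
  | 5 => (0, (⟨0,0,1,0⟩ : ℍ[ℝ]))
  | 6 => (0, (⟨0,0,0,1⟩ : ℍ[ℝ]))

end Octonion

/-- A left `𝕆`-module: a real vector space with an `ℝ`-bilinear octonion action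
satisfying `1 • m = m` and the alternating rule. -/
structure LeftOModule (M : Type) [AddCommGroup M] [Module ℝ M] where
  smul : Octonion →ₗ[ℝ] M →ₗ[ℝ] M
  one_smul : ∀ m : M, smul 1 m = m
  alt : ∀ (p q : Octonion) (m : M),
    smul (p * q) m - smul p (smul q m) = -(smul (q * p) m - smul q (smul p m))

/-- An `𝕆`-bimodule: compatible left and right `𝕆`-module structures with
`[p,q,m] = [q,m,p] = [m,p,q]`.  Here `l p m` is `p * m` and `r p m` is `m * p`. -/
structure OBimodule (M : Type) [AddCommGroup M] [Module ℝ M] where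
  l : Octonion →ₗ[ℝ] M →ₗ[ℝ] M
  r : Octonion →ₗ[ℝ] M →ₗ[ℝ] M
  one_l : ∀ m : M, l 1 m = m
  one_r : ∀ m : M, r 1 m = m
  /-- left alternating rule `[p,q,m] = -[q,p,m]` -/
  alt_l : ∀ (p q : Octonion) (m : M),
    l (p * q) m - l p (l q m) = -(l (q * p) m - l q (l p m))
  /-- right alternating rule `[m,p,q] = -[m,q,p]` -/
  alt_r : ∀ (p q : Octonion) (m : M),
    r q (r p m) - r (p * q) m = -(r p (r q m) - r (q * p) m)
  /-- `[p,q,m] = [q,m,p]` -/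
  comp_lm : ∀ (p q : Octonion) (m : M),
    l (p * q) m - l p (l q m) = r p (l q m) - l q (r p m)
  /-- `[p,q,m] = [m,p,q]` -/
  comp_rm : ∀ (p q : Octonion) (m : M),
    l (p * q) m - l p (l q m) = r q (r p m) - r (p * q) m


section ProofAux

private lemma octo_mul_def (x y : Octonion) :
    x * y = (x.1 * y.1 - star y.2 * x.2, y.2 * x.1 + x.2 * star y.1) := rfl
private lemma octo_star_def (x : Octonion) : star x = (star x.1, -x.2) := rfl
private lemma octo_one_def : (1 : Octonion) = ((1 : ℍ[ℝ]), 0) := rfl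
private lemma octo_smul_def (r : ℝ) (x : Octonion) : r • x = (r • x.1, r • x.2) := rfl
private lemma octo_ext (x y : Octonion) : x = y ↔ x.1 = y.1 ∧ x.2 = y.2 := Prod.ext_iff

private lemma octo_mul_fst (x y : Octonion) : (x * y).1 = x.1 * y.1 - star y.2 * x.2 := rfl
private lemma octo_mul_snd (x y : Octonion) : (x * y).2 = y.2 * x.1 + x.2 * star y.1 := rfl
private lemma octo_star_fst (x : Octonion) : (star x).1 = star x.1 := rfl
private lemma octo_star_snd (x : Octonion) : (star x).2 = -x.2 := rfl
private lemma octo_zero_fst : (0 : Octonion).1 = 0 := rfl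
private lemma octo_zero_snd : (0 : Octonion).2 = 0 := rfl
private lemma octo_one_fst : (1 : Octonion).1 = 1 := rfl
private lemma octo_one_snd : (1 : Octonion).2 = 0 := rfl
private lemma octo_smul_fst (r : ℝ) (x : Octonion) : (r • x).1 = r • x.1 := rfl
private lemma octo_smul_snd (r : ℝ) (x : Octonion) : (r • x).2 = r • x.2 := rfl

private def qmk (a b c d : ℝ) : ℍ[ℝ] := ⟨a, b, c, d⟩
private lemma qmk_re (a b c d : ℝ) : (qmk a b c d).re = a := rfl
private lemma qmk_imI (a b c d : ℝ) : (qmk a b c d).imI = b := rfl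
private lemma qmk_imJ (a b c d : ℝ) : (qmk a b c d).imJ = c := rfl
private lemma qmk_imK (a b c d : ℝ) : (qmk a b c d).imK = d := rfl
private lemma e0_fst : (Octonion.e 0).1 = qmk 0 1 0 0 := rfl
private lemma e0_snd : (Octonion.e 0).2 = 0 := rfl
private lemma e1_fst : (Octonion.e 1).1 = qmk 0 0 1 0 := rfl
private lemma e1_snd : (Octonion.e 1).2 = 0 := rfl
private lemma e2_fst : (Octonion.e 2).1 = qmk 0 0 0 1 := rfl
private lemma e2_snd : (Octonion.e 2).2 = 0 := rfl
private lemma e3_fst : (Octonion.e 3).1 = 0 := rfl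
private lemma e3_snd : (Octonion.e 3).2 = 1 := rfl

end ProofAux

set_option maxHeartbeats 4000000 in
/-- In the conjugate module `𝕆̄` (action `p ⋆ m = p̄m`), the conjugate associative
elements are exactly `ℝ·1`, and the only associative element is `0`. -/
theorem conjAssoc_of_O_conj (m : Octonion) :
    ((∀ p q : Octonion, star (p * q) * m = star q * (star p * m)) ↔
      ∃ r : ℝ, m = r • (1 : Octonion)) ∧
    ((∀ p q : Octonion, star (p * q) * m = star p * (star q * m)) → m = 0) := by
  constructor
  · constructor
    · intro h
      refine ⟨m.1.re, ?_⟩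
      have h01 := h (Octonion.e 0) (Octonion.e 1)
      have h03 := h (Octonion.e 0) (Octonion.e 3)
      have h13 := h (Octonion.e 1) (Octonion.e 3)
      have h23 := h (Octonion.e 2) (Octonion.e 3)
      simp only [↓octo_ext, ↓Quaternion.ext_iff, ↓octo_mul_fst, ↓octo_mul_snd, ↓octo_star_fst, ↓octo_star_snd, ↓octo_smul_fst, ↓octo_smul_snd, octo_one_fst, octo_one_snd, ↓Quaternion.re_mul, ↓Quaternion.imI_mul, ↓Quaternion.imJ_mul, ↓Quaternion.imK_mul, ↓Quaternion.re_sub, ↓Quaternion.imI_sub, ↓Quaternion.imJ_sub, ↓Quaternion.imK_sub, ↓Quaternion.re_add, ↓Quaternion.imI_add, ↓Quaternion.imJ_add, ↓Quaternion.imK_add, ↓Quaternion.re_neg, ↓Quaternion.imI_neg, ↓Quaternion.imJ_neg, ↓Quaternion.imK_neg, ↓Quaternion.re_star, ↓Quaternion.imI_star, ↓Quaternion.imJ_star, ↓Quaternion.imK_star, ↓Quaternion.re_smul, ↓Quaternion.imI_smul, ↓Quaternion.imJ_smul, ↓Quaternion.imK_smul, e0_fst, e0_snd, e1_fst, e1_snd,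 e2_fst, e2_snd, e3_fst, e3_snd] at h01 h03 h13 h23
      simp [Quaternion.re_mul, Quaternion.imI_mul, Quaternion.imJ_mul, Quaternion.imK_mul, Quaternion.re_sub, Quaternion.imI_sub, Quaternion.imJ_sub, Quaternion.imK_sub, Quaternion.re_add, Quaternion.imI_add, Quaternion.imJ_add, Quaternion.imK_add, Quaternion.re_neg, Quaternion.imI_neg, Quaternion.imJ_neg, Quaternion.imK_neg, Quaternion.re_star, Quaternion.imI_star, Quaternion.imJ_star, Quaternion.imK_star, Quaternion.re_smul, Quaternion.imI_smul, Quaternion.imJ_smul, Quaternion.imK_smul, qmk_re, qmk_imI, qmk_imJ, qmk_imK] at h01 h03 h13 h23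
      obtain ⟨c1, c2, c3, c4⟩ := h01
      obtain ⟨⟨d1, d2⟩, d3, d4⟩ := h03
      obtain ⟨⟨e1, e2⟩, e3, e4⟩ := h13
      obtain ⟨⟨f1, f2⟩, f3, f4⟩ := h23
      simp only [↓octo_ext, ↓Quaternion.ext_iff, ↓octo_mul_fst, ↓octo_mul_snd, ↓octo_star_fst, ↓octo_star_snd, ↓octo_smul_fst, ↓octo_smul_snd, octo_one_fst, octo_one_snd, ↓Quaternion.re_mul, ↓Quaternion.imI_mul, ↓Quaternion.imJ_mul, ↓Quaternion.imK_mul, ↓Quaternion.re_sub, ↓Quaternion.imI_sub, ↓Quaternion.imJ_sub, ↓Quaternion.imK_sub, ↓Quaternion.re_add, ↓Quaternion.imI_add, ↓Quaternion.imJ_add, ↓Quaternion.imK_add, ↓Quaternion.re_neg, ↓Quaternion.imI_neg, ↓Quaternion.imJ_neg, ↓Quaternion.imK_neg, ↓Quaternion.re_star, ↓Quaternion.imI_star, ↓Quaternion.imJ_star, ↓Quaternion.imK_star, ↓Quaternion.re_smul, ↓Quaternion.imI_smul, ↓Quaternion.imJ_smul, ↓Quaternion.imK_smul]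
      simp
      and_intros <;> linarith
    · rintro ⟨r, hm⟩ p q
      rw [hm]
      simp only [↓octo_ext, ↓Quaternion.ext_iff, ↓octo_mul_fst, ↓octo_mul_snd, ↓octo_star_fst, ↓octo_star_snd, ↓octo_smul_fst, ↓octo_smul_snd, octo_one_fst, octo_one_snd, ↓Quaternion.re_mul, ↓Quaternion.imI_mul, ↓Quaternion.imJ_mul, ↓Quaternion.imK_mul, ↓Quaternion.re_sub, ↓Quaternion.imI_sub, ↓Quaternion.imJ_sub, ↓Quaternion.imK_sub, ↓Quaternion.re_add, ↓Quaternion.imI_add, ↓Quaternion.imJ_add, ↓Quaternion.imK_add, ↓Quaternion.re_neg, ↓Quaternion.imI_neg, ↓Quaternion.imJ_neg, ↓Quaternion.imK_neg, ↓Quaternion.re_star, ↓Quaternion.imI_star, ↓Quaternion.imJ_star, ↓Quaternion.imK_star, ↓Quaternion.re_smul, ↓Quaternion.imI_smul, ↓Quaternion.imJ_smul, ↓Quaternion.imK_smul]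
      simp
      and_intros <;> ring
  · intro h
    have h01 := h (Octonion.e 0) (Octonion.e 1)
    have h03 := h (Octonion.e 0) (Octonion.e 3)
    have h13 := h (Octonion.e 1) (Octonion.e 3)
    have h23 := h (Octonion.e 2) (Octonion.e 3)
    simp only [↓octo_ext, ↓Quaternion.ext_iff, ↓octo_mul_fst, ↓octo_mul_snd, ↓octo_star_fst, ↓octo_star_snd, ↓octo_smul_fst, ↓octo_smul_snd, octo_one_fst, octo_one_snd, ↓Quaternion.re_mul, ↓Quaternion.imI_mul, ↓Quaternion.imJ_mul, ↓Quaternion.imK_mul, ↓Quaternion.re_sub, ↓Quaternion.imI_sub, ↓Quaternion.imJ_sub, ↓Quaternion.imK_sub, ↓Quaternion.re_add, ↓Quaternion.imI_add, ↓Quaternion.imJ_add, ↓Quaternion.imK_add, ↓Quaternion.re_neg, ↓Quaternion.imI_neg, ↓Quaternion.imJ_neg, ↓Quaternion.imK_neg, ↓Quaternion.re_star, ↓Quaternion.imI_star, ↓Quaternion.imJ_star, ↓Quaternion.imK_star, ↓Quaternion.re_smul, ↓Quaternion.imI_smul, ↓Quaternion.imJ_smul, ↓Quaternion.imK_smul,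 e0_fst, e0_snd, e1_fst, e1_snd, e2_fst, e2_snd, e3_fst, e3_snd] at h01 h03 h13 h23
    simp [Quaternion.re_mul, Quaternion.imI_mul, Quaternion.imJ_mul, Quaternion.imK_mul, Quaternion.re_sub, Quaternion.imI_sub, Quaternion.imJ_sub, Quaternion.imK_sub, Quaternion.re_add, Quaternion.imI_add, Quaternion.imJ_add, Quaternion.imK_add, Quaternion.re_neg, Quaternion.imI_neg, Quaternion.imJ_neg, Quaternion.imK_neg, Quaternion.re_star, Quaternion.imI_star, Quaternion.imJ_star, Quaternion.imK_star, Quaternion.re_smul, Quaternion.imI_smul, Quaternion.imJ_smul, Quaternion.imK_smul, qmk_re, qmk_imI, qmk_imJ, qmk_imK] at h01 h03 h13 h23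
    obtain ⟨c1, c2, c3, c4⟩ := h01
    obtain ⟨⟨d1, d2⟩, d3, d4⟩ := h03
    obtain ⟨⟨e1, e2⟩, e3, e4⟩ := h13
    obtain ⟨⟨f1, f2⟩, f3, f4⟩ := h23
    simp only [↓octo_ext, ↓Quaternion.ext_iff, ↓octo_mul_fst, ↓octo_mul_snd, ↓octo_star_fst, ↓octo_star_snd, ↓octo_smul_fst, ↓octo_smul_snd, octo_one_fst, octo_one_snd, ↓Quaternion.re_mul, ↓Quaternion.imI_mul, ↓Quaternion.imJ_mul, ↓Quaternion.imK_mul, ↓Quaternion.re_sub, ↓Quaternion.imI_sub, ↓Quaternion.imJ_sub, ↓Quaternion.imK_sub, ↓Quaternion.re_add, ↓Quaternion.imI_add, ↓Quaternion.imJ_add, ↓Quaternion.imK_add, ↓Quaternion.re_neg, ↓Quaternion.imI_neg, ↓Quaternion.imJ_neg, ↓Quaternion.imK_neg, ↓Quaternion.re_star, ↓Quaternion.imI_star, ↓Quaternion.imJ_star, ↓Quaternion.imK_star, ↓Quaternion.re_smul, ↓Quaternion.imI_smul, ↓Quaternion.imJ_smul, ↓Quaternion.imK_smul, octo_zero_fst,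 octo_zero_snd]
    simp
    and_intros <;> linarith
end
end

section
/- Let M be an 𝕆-bimodule and m a conjugate associative element of M. Then (am)b = (a·b̄)m for all octonions a, b. -/
noncomputable section

open Quaternion

namespace Octonion

/- Auxiliary component lemmas (all definitional). -/
@[simp] lemma mul_fst' (x y : Octonion) : (x * y).1 = x.1 * y.1 - star y.2 * x.2 := rfl
@[simp] lemma mul_snd' (x y : Octonion) : (x * y).2 = y.2 * x.1 + x.2 * star y.1 := rfl
@[simp] lemma sub_fst' (x y : Octonion) : (x - y).1 = x.1 - y.1 := rfl
@[simp] lemma sub_snd' (x y : Octonion) : (x - y).2 = x.2 - y.2 := rfl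
@[simp] lemma add_fst' (x y : Octonion) : (x + y).1 = x.1 + y.1 := rfl
@[simp] lemma add_snd' (x y : Octonion) : (x + y).2 = x.2 + y.2 := rfl
@[simp] lemma smul_fst' (t : ℝ) (x : Octonion) : (t • x).1 = t • x.1 := rfl
@[simp] lemma smul_snd' (t : ℝ) (x : Octonion) : (t • x).2 = t • x.2 := rfl
@[simp] lemma one_fst' : (1 : Octonion).1 = 1 := rfl
@[simp] lemma one_snd' : (1 : Octonion).2 = 0 := rfl
@[simp] lemma star_fst' (x : Octonion) : (star x).1 = star x.1 := rfl
@[simp] lemma star_snd' (x : Octonion) : (star x).2 = -x.2 := rfl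

lemma oct_ext {x y : Octonion} (hf : x.1 = y.1) (hs : x.2 = y.2) : x = y := Prod.ext hf hs

/- Each imaginary unit is half a commutator. -/
lemma e0_comm : e 0 = (2⁻¹ : ℝ) • (e 1 * e 2 - e 2 * e 1) := by
  apply oct_ext <;> ext <;> simp [Quaternion.re_mul, Quaternion.imI_mul, Quaternion.imJ_mul, Quaternion.imK_mul] <;> simp [e] <;> norm_num
lemma e1_comm : e 1 = (2⁻¹ : ℝ) • (e 2 * e 0 - e 0 * e 2) := by
  apply oct_ext <;> ext <;> simp [Quaternion.re_mul, Quaternion.imI_mul, Quaternion.imJ_mul, Quaternion.imK_mul] <;> simp [e] <;> norm_num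
lemma e2_comm : e 2 = (2⁻¹ : ℝ) • (e 0 * e 1 - e 1 * e 0) := by
  apply oct_ext <;> ext <;> simp [Quaternion.re_mul, Quaternion.imI_mul, Quaternion.imJ_mul, Quaternion.imK_mul] <;> simp [e] <;> norm_num
lemma e3_comm : e 3 = (2⁻¹ : ℝ) • (e 4 * e 0 - e 0 * e 4) := by
  apply oct_ext <;> ext <;> simp [Quaternion.re_mul, Quaternion.imI_mul, Quaternion.imJ_mul, Quaternion.imK_mul] <;> simp [e] <;> norm_num
lemma e4_comm : e 4 = (2⁻¹ : ℝ) • (e 0 * e 3 - e 3 * e 0) := by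
  apply oct_ext <;> ext <;> simp [Quaternion.re_mul, Quaternion.imI_mul, Quaternion.imJ_mul, Quaternion.imK_mul] <;> simp [e] <;> norm_num
lemma e5_comm : e 5 = (2⁻¹ : ℝ) • (e 1 * e 3 - e 3 * e 1) := by
  apply oct_ext <;> ext <;> simp [Quaternion.re_mul, Quaternion.imI_mul, Quaternion.imJ_mul, Quaternion.imK_mul] <;> simp [e] <;> norm_num
lemma e6_comm : e 6 = (2⁻¹ : ℝ) • (e 2 * e 3 - e 3 * e 2) := by
  apply oct_ext <;> ext <;> simp [Quaternion.re_mul, Quaternion.imI_mul, Quaternion.imJ_mul, Quaternion.imK_mul] <;> simp [e] <;> norm_num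

/-- Decomposition of an octonion in the standard basis. -/
lemma decomp (x : Octonion) :
    x = x.1.re • 1 + x.1.imI • e 0 + x.1.imJ • e 1 + x.1.imK • e 2 +
      x.2.re • e 3 + x.2.imI • e 4 + x.2.imJ • e 5 + x.2.imK • e 6 := by
  apply oct_ext <;> ext <;> simp <;> simp [e]

/-- `star b = (2 * Re b) • 1 - b`. -/
lemma star_eq (b : Octonion) : star b = (2 * b.1.re) • (1 : Octonion) - b := by
  apply oct_ext <;> (ext <;> simp <;> ring)

/-- `a * star b = (2 * Re b) • a - a * b`. -/
lemma mul_star_eq (a b : Octonion) :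
    a * star b = (2 * b.1.re) • a - a * b := by
  apply oct_ext <;> (ext <;> simp <;> ring)

end Octonion

/-- For a conjugate associative element `m` of an `𝕆`-bimodule,
`(am)b = (a·b̄)m` for all octonions `a`, `b`. -/
theorem bimodule_conjAssoc_amb {M : Type} [AddCommGroup M] [Module ℝ M]
    (B : OBimodule M) (m : M)
    (h1 : ∀ p q : Octonion, B.l (p * q) m = B.l q (B.l p m))
    (h2 : ∀ p q : Octonion, B.r q (B.r p m) = B.r (q * p) m) :
    ∀ a b : Octonion, B.r b (B.l a m) = B.l (a * star b) m := by
  -- Step 1: on commutators, right action equals minus left action.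
  have key1 : ∀ p q : Octonion, B.r (q * p - p * q) m = -(B.l (q * p - p * q) m) := by
    intro p q
    have hc := B.comp_rm p q m
    rw [h2, ← h1 q p] at hc
    -- hc : B.l (p*q) m - B.l (q*p) m = B.r (q*p) m - B.r (p*q) m
    simp only [map_sub, LinearMap.sub_apply]
    rw [← hc]
    abel
  -- Step 2: on each imaginary unit, right action equals minus left action.
  have aux : ∀ p q : Octonion,
      B.r ((2⁻¹ : ℝ) • (q * p - p * q)) m = -(B.l ((2⁻¹ : ℝ) • (q * p - p * q)) m) := by
    intro p q
    simp only [map_smul, LinearMap.smul_apply, key1 p q, smul_neg]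
  have he0 : B.r (Octonion.e 0) m = -(B.l (Octonion.e 0) m) := by
    rw [Octonion.e0_comm]; exact aux _ _
  have he1 : B.r (Octonion.e 1) m = -(B.l (Octonion.e 1) m) := by
    rw [Octonion.e1_comm]; exact aux _ _
  have he2 : B.r (Octonion.e 2) m = -(B.l (Octonion.e 2) m) := by
    rw [Octonion.e2_comm]; exact aux _ _
  have he3 : B.r (Octonion.e 3) m = -(B.l (Octonion.e 3) m) := by
    rw [Octonion.e3_comm]; exact aux _ _
  have he4 : B.r (Octonion.e 4) m = -(B.l (Octonion.e 4) m) := by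
    rw [Octonion.e4_comm]; exact aux _ _
  have he5 : B.r (Octonion.e 5) m = -(B.l (Octonion.e 5) m) := by
    rw [Octonion.e5_comm]; exact aux _ _
  have he6 : B.r (Octonion.e 6) m = -(B.l (Octonion.e 6) m) := by
    rw [Octonion.e6_comm]; exact aux _ _
  -- Step 3: `m * b = b̄ * m` for all `b`.
  have key3 : ∀ b : Octonion, B.r b m = B.l (star b) m := by
    intro b
    have hb : B.r b m + B.l b m = (2 * b.1.re) • m := by
      conv_lhs => rw [Octonion.decomp b]
      simp only [map_add, LinearMap.add_apply, map_smul, LinearMap.smul_apply,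
        B.one_l, B.one_r, he0, he1, he2, he3, he4, he5, he6]
      module
    rw [Octonion.star_eq b, map_sub, LinearMap.sub_apply, map_smul, LinearMap.smul_apply,
      B.one_l, ← hb]
    abel
  -- Main computation.
  intro a b
  have hcomp := B.comp_lm b a m
  rw [h1 b a, key3 b] at hcomp
  -- hcomp : B.l a (B.l b m) - B.l b (B.l a m) = B.r b (B.l a m) - B.l a (B.l (star b) m)
  have hA : B.l a (B.l b m) + B.l a (B.l (star b) m) = (2 * b.1.re) • B.l a m := by
    rw [← map_add (B.l a), ← LinearMap.add_apply, ← map_add B.l]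
    have : b + star b = (2 * b.1.re) • (1 : Octonion) := by
      rw [Octonion.star_eq b]; abel
    rw [this, map_smul, LinearMap.smul_apply, B.one_l, map_smul]
  rw [Octonion.mul_star_eq a b, map_sub, LinearMap.sub_apply, map_smul, LinearMap.smul_apply,
    ← hA, h1 a b]
  rw [sub_eq_sub_iff_add_eq_add] at hcomp
  -- hcomp : B.l a (B.l b m) + B.l a (B.l (star b) m) = B.r b (B.l a m) + B.l b (B.l a m)
  rw [hcomp]
  abel
end
end
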